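/- With t the formal power series inverse of x = (27/4) t (1-t)^2 (zero constant term), for every n \ge 0 the coefficient of x^n in 1/((1-t)(1-3t)) equals (4/27)^n * binom(3n+1, n). -/

import Mathlib

open PowerSeries

lemma chooseQ_aux (n : ℕ) :
    ((3*n+4).choose (n+1) : ℚ) * ((n+1)*(2*n+2)*(2*n+3)) =
    ((3*n+1).choose n : ℚ) * ((3*n+2)*(3*n+3)*(3*n+4)) := by
  have q4 : (3*n+4).choose (n+1) * (n+1) = (3*n+4).choose n * (2*n+4) := by
    have h := Nat.choose_succ_right_eq (3*n+4) n
    rwa [show 3*n+4-n = 2*n+4 by omega] at h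
  have q3 : (3*n+3).choose n * (3*n+4) = (3*n+4).choose n * (2*n+4) := by
    have h := Nat.choose_mul_succ_eq (3*n+3) n
    rwa [show 3*n+3+1 = 3*n+4 by omega, show 3*n+3+1-n = 2*n+4 by omega] at h
  have q2 : (3*n+2).choose n * (3*n+3) = (3*n+3).choose n * (2*n+3) := by
    have h := Nat.choose_mul_succ_eq (3*n+2) n
    rwa [show 3*n+2+1 = 3*n+3 by omega, show 3*n+2+1-n = 2*n+3 by omega] at h
  have q1 : (3*n+1).choose n * (3*n+2) = (3*n+2).choose n * (2*n+2) := by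
    have h := Nat.choose_mul_succ_eq (3*n+1) n
    rwa [show 3*n+1+1 = 3*n+2 by omega, show 3*n+1+1-n = 2*n+2 by omega] at h
  have c4 : ((3*n+4).choose (n+1) : ℚ) * ((n:ℚ)+1) = ((3*n+4).choose n : ℚ) * (2*(n:ℚ)+4) := by
    exact_mod_cast congrArg (Nat.cast (R := ℚ)) q4
  have c3 : ((3*n+3).choose n : ℚ) * (3*(n:ℚ)+4) = ((3*n+4).choose n : ℚ) * (2*(n:ℚ)+4) := by
    exact_mod_cast congrArg (Nat.cast (R := ℚ)) q3
  have c2 : ((3*n+2).choose n : ℚ) * (3*(n:ℚ)+3) = ((3*n+3).choose n : ℚ) * (2*(n:ℚ)+3) := by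
    exact_mod_cast congrArg (Nat.cast (R := ℚ)) q2
  have c1 : ((3*n+1).choose n : ℚ) * (3*(n:ℚ)+2) = ((3*n+2).choose n : ℚ) * (2*(n:ℚ)+2) := by
    exact_mod_cast congrArg (Nat.cast (R := ℚ)) q1
  push_cast
  linear_combination ((2*(n:ℚ)+2)*(2*(n:ℚ)+3))*c4 - ((2*(n:ℚ)+2)*(2*(n:ℚ)+3))*c3
    - ((2*(n:ℚ)+2)*(3*(n:ℚ)+4))*c2 - ((3*(n:ℚ)+3)*(3*(n:ℚ)+4))*c1

set_option maxHeartbeats 2000000 in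
/-- With `t ∈ ℚ⟦x⟧`, `t(0) = 0`, `x = (27/4) t (1-t)²`:
`[x^n] 1/((1-t)(1-3t)) = (4/27)^n C(3n+1, n)` for all `n ≥ 0`. -/
theorem coeff_f_zero (t : PowerSeries ℚ)
    (h0 : PowerSeries.constantCoeff (R := ℚ) t = 0)
    (ht : PowerSeries.C (R := ℚ) (27 / 4) * t * (1 - t) ^ 2 = PowerSeries.X)
    (n : ℕ) :
    PowerSeries.coeff (R := ℚ) n (((1 - t) * (1 - 3 * t))⁻¹) =
      (4 / 27 : ℚ) ^ n * (Nat.choose (3 * n + 1) n : ℚ) := by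
  set u1 := d⁄dX ℚ t with hu1
  set u2 := d⁄dX ℚ u1 with hu2
  have d3 : (d⁄dX ℚ) (3 : ℚ⟦X⟧) = 0 := by
    rw [show (3:ℚ⟦X⟧) = ((3:ℕ):ℚ⟦X⟧) by norm_num]; exact Derivation.map_natCast _ 3
  have hC27 : (C (R := ℚ)) (27/4 : ℚ) * 4 = 27 := by
    rw [show (4:ℚ⟦X⟧) = C (R := ℚ) 4 from (map_ofNat _ 4).symm, ← map_mul,
      show (27/4 : ℚ)*4 = 27 by norm_num]
    exact map_ofNat _ 27
  have hCne : (C (R := ℚ)) (27/4 : ℚ) ≠ 0 := by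
    intro h; have := congrArg (constantCoeff (R := ℚ)) h
    simp only [constantCoeff_C, map_zero] at this; norm_num at this
  -- first derivative of the defining equation
  have h2 : C (R := ℚ) (27/4) * u1 * ((1 - t) * (1 - 3*t)) = 1 := by
    have h := congrArg (d⁄dX ℚ) ht
    simp only [Derivation.leibniz, Derivation.leibniz_pow, derivative_X, derivative_C, map_sub,
      Derivation.map_one_eq_zero, smul_eq_mul, d3] at h
    linear_combination h
  -- second derivative
  have h3 : C (R := ℚ) (27/4) * (u2 * ((1 - t) * (1 - 3*t)) + u1 * u1 * (6*t - 4)) = 0 := by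
    have h := congrArg (d⁄dX ℚ) h2
    simp only [Derivation.leibniz, Derivation.leibniz_pow, derivative_X, derivative_C, map_sub,
      Derivation.map_one_eq_zero, smul_eq_mul, d3, map_mul] at h
    linear_combination h
  -- integer-coefficient versions
  have ht' : 27 * t * (1-t)^2 = 4 * X := by
    linear_combination (4:ℚ⟦X⟧) * ht - (t*(1-t)^2) * hC27
  have h2' : 27 * u1 * ((1 - t) * (1 - 3*t)) = 4 := by
    linear_combination (4:ℚ⟦X⟧) * h2 - (u1*((1-t)*(1-3*t))) * hC27
  have h3' : u2 * ((1 - t) * (1 - 3*t)) + u1 * u1 * (6*t - 4) = 0 :=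
    (mul_eq_zero.mp h3).resolve_left hCne
  -- the ODE (times 32 * W^3)
  have key : (32:ℚ⟦X⟧) * ((X^1*(C (R := ℚ) 27*u1) + X^2*(C (R := ℚ) 54*u2) - X^2*(C (R := ℚ) 54*u1)
      - X^3*(C (R := ℚ) 54*u2) + X^1*(C (R := ℚ) 6*t) - X^1*(C (R := ℚ) 4)) * ((1 - t) * (1 - 3*t))^3) = 0 := by
    linear_combination (norm := (simp only [map_ofNat]; ring1))
      (((32:ℚ⟦X⟧)) + ((-432:ℚ⟦X⟧)*u2*X) + ((432:ℚ⟦X⟧)*u2*X^2) + ((-216:ℚ⟦X⟧)*u1) + ((432:ℚ⟦X⟧)*u1*X) + ((-432:ℚ⟦X⟧)*t) + ((-2916:ℚ⟦X⟧)*t*u2) + ((8100:ℚ⟦X⟧)*t*u2*X) + ((-5184:ℚ⟦X⟧)*t*u2*X^2) + ((5508:ℚ⟦X⟧)*t*u1) + ((-5184:ℚ⟦X⟧)*t*u1*X) + ((2400:ℚ⟦X⟧)*t^2) + ((60507:ℚ⟦X⟧)*t^2*u2) + ((-65448:ℚ⟦X⟧)*t^2*u2*X) + ((24624:ℚ⟦X⟧)*t^2*u2*X^2)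 + ((-53136:ℚ⟦X⟧)*t^2*u1) + ((24624:ℚ⟦X⟧)*t^2*u1*X) + ((-7088:ℚ⟦X⟧)*t^3) + ((-554040:ℚ⟦X⟧)*t^3*u2) + ((297864:ℚ⟦X⟧)*t^3*u2*X) + ((-58752:ℚ⟦X⟧)*t^3*u2*X^2) + ((268488:ℚ⟦X⟧)*t^3*u1) + ((-58752:ℚ⟦X⟧)*t^3*u1*X) + ((12000:ℚ⟦X⟧)*t^4) + ((2948805:ℚ⟦X⟧)*t^4*u2) + ((-837864:ℚ⟦X⟧)*t^4*u2*X) + ((73872:ℚ⟦X⟧)*t^4*u2*X^2) + ((-800928:ℚ⟦X⟧)*t^4*u1) + ((73872:ℚ⟦X⟧)*t^4*u1*X) + ((-11664:ℚ⟦X⟧)*t^5) + ((-10118520:ℚ⟦X⟧)*t^5*u2) + ((1504656:ℚ⟦X⟧)*t^5*u2*X) + ((-46656:ℚ⟦X⟧)*t^5*u2*X^2) + ((1481328:ℚ⟦X⟧)*t^5*u1) + ((-46656:ℚ⟦X⟧)*t^5*u1*X) + ((6048:ℚ⟦X⟧)*t^6) + ((23478174:ℚ⟦X⟧)*t^6*u2)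 + ((-1720440:ℚ⟦X⟧)*t^6*u2*X) + ((11664:ℚ⟦X⟧)*t^6*u2*X^2) + ((-1714608:ℚ⟦X⟧)*t^6*u1) + ((11664:ℚ⟦X⟧)*t^6*u1*X) + ((-1296:ℚ⟦X⟧)*t^7) + ((-37581408:ℚ⟦X⟧)*t^7*u2) + ((1207224:ℚ⟦X⟧)*t^7*u2*X) + ((1207224:ℚ⟦X⟧)*t^7*u1) + ((41531130:ℚ⟦X⟧)*t^8*u2) + ((-472392:ℚ⟦X⟧)*t^8*u2*X) + ((-472392:ℚ⟦X⟧)*t^8*u1) + ((-31099140:ℚ⟦X⟧)*t^9*u2) + ((78732:ℚ⟦X⟧)*t^9*u2*X) + ((78732:ℚ⟦X⟧)*t^9*u1) + ((15057495:ℚ⟦X⟧)*t^10*u2) + ((-4251528:ℚ⟦X⟧)*t^11*u2) + ((531441:ℚ⟦X⟧)*t^12*u2)) * ht' + (((216:ℚ⟦X⟧)*t) + ((-3348:ℚ⟦X⟧)*t^2) + ((11664:ℚ⟦X⟧)*t^2*u1) + ((22248:ℚ⟦X⟧)*t^3) + ((-189540:ℚ⟦X⟧)*t^3*u1) + ((-83160:ℚ⟦X⟧)*t^4)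 + ((1336986:ℚ⟦X⟧)*t^4*u1) + ((192888:ℚ⟦X⟧)*t^5) + ((-5391684:ℚ⟦X⟧)*t^5*u1) + ((-288576:ℚ⟦X⟧)*t^6) + ((13783932:ℚ⟦X⟧)*t^6*u1) + ((279288:ℚ⟦X⟧)*t^7) + ((-23395068:ℚ⟦X⟧)*t^7*u1) + ((-169128:ℚ⟦X⟧)*t^8) + ((26768880:ℚ⟦X⟧)*t^8*u1) + ((58320:ℚ⟦X⟧)*t^9) + ((-20444076:ℚ⟦X⟧)*t^9*u1) + ((-8748:ℚ⟦X⟧)*t^10) + ((9998964:ℚ⟦X⟧)*t^10*u1) + ((-2834352:ℚ⟦X⟧)*t^11*u1) + ((354294:ℚ⟦X⟧)*t^12*u1)) * h2' + (((78732:ℚ⟦X⟧)*t^2) + ((-1476225:ℚ⟦X⟧)*t^3) + ((12164094:ℚ⟦X⟧)*t^4) + ((-58084533:ℚ⟦X⟧)*t^5) + ((178564176:ℚ⟦X⟧)*t^6) + ((-371418210:ℚ⟦X⟧)*t^7) + ((534354084:ℚ⟦X⟧)*t^8) + ((-532976274:ℚ⟦X⟧)*t^9) + ((362088468:ℚ⟦X⟧)*t^10)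 + ((-159963741:ℚ⟦X⟧)*t^11) + ((41452398:ℚ⟦X⟧)*t^12) + ((-4782969:ℚ⟦X⟧)*t^13)) * h3'
  have h32 : (32:ℚ⟦X⟧) ≠ 0 := by
    intro h; have := congrArg (constantCoeff (R := ℚ)) h
    simp only [map_ofNat, map_zero] at this; norm_num at this
  have hWc : constantCoeff (R := ℚ) ((1 - t) * (1 - 3*t)) ≠ 0 := by
    simp [h0]
  have hWne : ((1 - t) * (1 - 3*t))^3 ≠ (0:ℚ⟦X⟧) := by
    refine pow_ne_zero _ (fun h => hWc ?_)
    rw [h, map_zero]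
  have hG3 : X^1*(C (R := ℚ) 27*u1) + X^2*(C (R := ℚ) 54*u2) - X^2*(C (R := ℚ) 54*u1)
      - X^3*(C (R := ℚ) 54*u2) + X^1*(C (R := ℚ) 6*t) - X^1*(C (R := ℚ) 4) = 0 := by
    rcases mul_eq_zero.mp key with h | h
    · exact absurd h h32
    · exact (mul_eq_zero.mp h).resolve_right hWne
  -- recurrence
  have hrec : ∀ k : ℕ, 9*((k:ℚ)+2)*(2*(k:ℚ)+3)*(coeff (R := ℚ) (k+2) t)
      = 2*(3*(k:ℚ)+2)*(3*(k:ℚ)+4)*(coeff (R := ℚ) (k+1) t) := by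
    intro k
    rcases k with _ | j
    · have h := congrArg (coeff (R := ℚ) 2) hG3
      simp only [map_add, map_sub, map_zero, coeff_X_pow_mul', coeff_C_mul, coeff_C] at h
      norm_num at h
      rw [hu2, hu1] at h
      have e2' : constantCoeff (R := ℚ) ((d⁄dX ℚ) ((d⁄dX ℚ) t)) = coeff (R := ℚ) 2 t * 2 := by
        rw [← coeff_zero_eq_constantCoeff_apply, coeff_derivative, coeff_derivative]; norm_num
      have e1' : constantCoeff (R := ℚ) ((d⁄dX ℚ) t) = coeff (R := ℚ) 1 t := by
        rw [← coeff_zero_eq_constantCoeff_apply, coeff_derivative]; norm_num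
      rw [e2', e1'] at h
      simp only [coeff_derivative] at h
      push_cast at h ⊢
      linear_combination h/3
    · have h := congrArg (coeff (R := ℚ) (j+3)) hG3
      simp only [map_add, map_sub, map_zero, coeff_X_pow_mul', coeff_C_mul, coeff_C] at h
      rw [show j+3-1 = j+2 by omega, show j+3-2 = j+1 by omega, show j+3-3 = j by omega,
        if_pos (by omega : (1:ℕ) ≤ j+3), if_pos (by omega : (2:ℕ) ≤ j+3),
        if_pos (by omega : (3:ℕ) ≤ j+3)] at h
      rw [if_neg (by omega : ¬ (j+2 = 0))] at h
      rw [hu2, hu1] at h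
      simp only [coeff_derivative] at h
      push_cast at h ⊢
      linear_combination h/3
    -- c1
  have hc1 : coeff (R := ℚ) 1 t = 4/27 := by
    have h := congrArg (constantCoeff (R := ℚ)) h2'
    have e : constantCoeff (R := ℚ) u1 = coeff (R := ℚ) 1 t := by
      rw [← coeff_zero_eq_constantCoeff_apply, hu1, coeff_derivative]
      norm_num
    simp only [map_mul, map_sub, map_one, map_ofNat, h0, e] at h
    norm_num at h
    linarith
  -- main induction
  have main : ∀ m : ℕ, (27/4 : ℚ) * ((coeff (R := ℚ) (m+1) t) * ((m:ℚ)+1))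
      = (4/27)^m * ((3*m+1).choose m : ℚ) := by
    intro m
    induction m with
    | zero => norm_num [hc1]
    | succ m ih =>
      rw [show 3*(m+1)+1 = 3*m+4 by omega]
      have hA : (9*((m:ℚ)+1)^2*((m:ℚ)+2)*(2*(m:ℚ)+3)) ≠ 0 := by positivity
      refine mul_left_cancel₀ hA ?_
      push_cast
      linear_combination ((27:ℚ)/4*((m:ℚ)+1)^2*((m:ℚ)+2)) * (hrec m)
        + (2*((m:ℚ)+1)*((m:ℚ)+2)*(3*(m:ℚ)+2)*(3*(m:ℚ)+4)) * ih
        + (-(2/3)*((m:ℚ)+2)*((4:ℚ)/27)^m) * (chooseQ_aux m)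
  -- conclude
  have hfi : ((1 - t) * (1 - 3*t))⁻¹ = C (R := ℚ) (27/4) * u1 :=
    ((PowerSeries.eq_inv_iff_mul_eq_one hWc).mpr (by linear_combination h2)).symm
  rw [hfi, coeff_C_mul, hu1, coeff_derivative]
  push_cast
  linear_combination main n
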